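/- arXiv:1810.03086 — 10 statements merged into one kernel-verified Lean document; each statement's English description precedes it below -/
import Mathlib

section
/- Let 𝔤 = K × 𝔞 × K be the double extension of (𝔞, B) by the derivation D. Then the bracket ⁅(u,a,v),(u',a',v')⁆_𝔤 := (B (D a) a', ⁅a,a'⁆ + v • D a' − v' • D a, 0) is alternating (⁅f,f⁆_𝔤 = 0 for every f ∈ 𝔤) and satisfies the Jacobi–Leibniz identity ⁅f,⁅g,h⁆_𝔤⁆_𝔤 = ⁅⁅f,g⁆_𝔤,h⁆_𝔤 + ⁅g,⁅f,h⁆_𝔤⁆_𝔤 for all f,g,h ∈ 𝔤; consequently 𝔤 with this bracket is a Lie algebra over K, and moreover x = (1,0,0) satisfies ⁅x,f⁆_𝔤 = 0 for all f ∈ 𝔤. -/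
/-- The bracket of the double extension of `(𝔞, B)` by the derivation `D`
on the space `K × 𝔞 × K`. -/
def doubleExtBracket {K : Type*} [Field K] {L : Type*} [LieRing L] [LieAlgebra K L]
    (B : L →ₗ[K] L →ₗ[K] K) (D : L →ₗ[K] L) (f g : K × L × K) : K × L × K :=
  (B (D f.2.1) g.2.1, ⁅f.2.1, g.2.1⁆ + f.2.2 • D g.2.1 - g.2.2 • D f.2.1, (0 : K))

theorem double_extension_is_lie_algebra
    {K : Type*} [Field K] (hchar : (2 : K) ≠ 0)
    {L : Type*} [LieRing L] [LieAlgebra K L]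
    (B : L →ₗ[K] L →ₗ[K] K)
    (hsym : ∀ a b : L, B a b = B b a)
    (hinv : ∀ a b c : L, B ⁅a, b⁆ c = B a ⁅b, c⁆)
    (D : L →ₗ[K] L)
    (hder : ∀ a b : L, D ⁅a, b⁆ = ⁅D a, b⁆ + ⁅a, D b⁆)
    (hDinv : ∀ a b : L, B (D a) b + B a (D b) = 0) :
    (∀ f : K × L × K, doubleExtBracket B D f f = 0) ∧
    (∀ f g h : K × L × K,
      doubleExtBracket B D f (doubleExtBracket B D g h) =
        doubleExtBracket B D (doubleExtBracket B D f g) h +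
        doubleExtBracket B D g (doubleExtBracket B D f h)) ∧
    (∀ f : K × L × K, doubleExtBracket B D ((1 : K), (0 : L), (0 : K)) f = 0) := by
  have key : ∀ a b c : L, B (D a) ⁅b, c⁆ = B (D ⁅a, b⁆) c + B (D b) ⁅a, c⁆ := by
    intro a b c
    have h1 : B ⁅a, D b⁆ c = B a ⁅D b, c⁆ := hinv a (D b) c
    have h2 : B (D b) ⁅a, c⁆ = B a ⁅c, D b⁆ := by
      rw [hsym (D b) ⁅a, c⁆, hinv a c (D b)]
    have h3 : B a ⁅D b, c⁆ + B a ⁅c, D b⁆ = 0 := by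
      have h4 : ⁅D b, c⁆ = -⁅c, D b⁆ := by rw [← lie_skew]
      rw [h4, map_neg, neg_add_cancel]
    rw [hder a b, map_add, LinearMap.add_apply, hinv (D a) b c, h1, h2]
    linear_combination -h3
  refine ⟨?_, ?_, ?_⟩
  · rintro ⟨u, a, v⟩
    have h1 := hDinv a a
    have h2 := hsym (D a) a
    have h3 : (2 : K) * B (D a) a = 0 := by linear_combination h1 + h2
    have h4 : B (D a) a = 0 := by
      rcases mul_eq_zero.mp h3 with h | h
      · exact absurd h hchar
      · exact h
    simp [doubleExtBracket, h4]
  · rintro ⟨uf, a, vf⟩ ⟨ug, b, vg⟩ ⟨uh, c, vh⟩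
    simp only [doubleExtBracket, Prod.mk_add_mk, Prod.mk.injEq]
    refine ⟨?_, ?_, by ring⟩
    · simp only [map_add, map_sub, map_smul, LinearMap.add_apply, LinearMap.sub_apply,
        LinearMap.smul_apply, smul_eq_mul]
      linear_combination key a b c + vg * hDinv (D a) c - vf * hDinv (D b) c
        - vh * hsym (D a) (D b)
    · simp only [map_add, map_sub, map_smul, hder, lie_add, add_lie, lie_sub, sub_lie,
        lie_smul, smul_lie, smul_add, smul_sub, smul_smul, zero_smul, smul_zero, sub_zero,
        lie_lie]
      linear_combination (norm := module) (-vh : K) • lie_skew (D a) b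
  · rintro ⟨u, a, v⟩
    simp [doubleExtBracket]
end

section
/- Let 𝔤 = K × 𝔞 × K be the double extension of (𝔞, B) by the derivation D, and assume in addition that B is nondegenerate (B a b = 0 for all b implies a = 0). Define the bilinear form B_𝔤 on 𝔤 by B_𝔤 (u,a,v) (u',a',v') := B a a' + u·v' + u'·v. Then B_𝔤 is symmetric, invariant for the double-extension bracket (B_𝔤 ⁅f,g⁆_𝔤 h = B_𝔤 f ⁅g,h⁆_𝔤 for all f,g,h ∈ 𝔤), and nondegenerate. -/
/-- The natural bilinear form on the double extension. -/
def doubleExtForm {K : Type*} [Field K] {L : Type*} [LieRing L] [LieAlgebra K L]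
    (B : L →ₗ[K] L →ₗ[K] K) (f g : K × L × K) : K :=
  B f.2.1 g.2.1 + f.1 * g.2.2 + g.1 * f.2.2

theorem double_extension_form_is_NIS
    {K : Type*} [Field K] (hchar : (2 : K) ≠ 0)
    {L : Type*} [LieRing L] [LieAlgebra K L]
    (B : L →ₗ[K] L →ₗ[K] K)
    (hsym : ∀ a b : L, B a b = B b a)
    (hinv : ∀ a b c : L, B ⁅a, b⁆ c = B a ⁅b, c⁆)
    (hnondeg : ∀ a : L, (∀ b : L, B a b = 0) → a = 0)
    (D : L →ₗ[K] L)
    (hder : ∀ a b : L, D ⁅a, b⁆ = ⁅D a, b⁆ + ⁅a, D b⁆)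
    (hDinv : ∀ a b : L, B (D a) b + B a (D b) = 0) :
    (∀ f g : K × L × K, doubleExtForm B f g = doubleExtForm B g f) ∧
    (∀ f g h : K × L × K,
      doubleExtForm B (doubleExtBracket B D f g) h =
        doubleExtForm B f (doubleExtBracket B D g h)) ∧
    (∀ f : K × L × K, (∀ g : K × L × K, doubleExtForm B f g = 0) → f = 0) := by
  refine ⟨?_, ?_, ?_⟩
  · intro f g
    simp only [doubleExtForm, hsym f.2.1 g.2.1]
    ring
  · intro f g h
    simp only [doubleExtForm, doubleExtBracket, map_add, map_sub, map_smul,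
      LinearMap.add_apply, LinearMap.sub_apply, LinearMap.smul_apply, smul_eq_mul]
    linear_combination hinv f.2.1 g.2.1 h.2.1 - g.2.2 * hDinv f.2.1 h.2.1
      + h.2.2 * hDinv f.2.1 g.2.1
  · rintro ⟨u, a, v⟩ hf
    have hu := hf (0, 0, 1)
    have hv := hf (1, 0, 0)
    simp only [doubleExtForm, map_zero, LinearMap.zero_apply, mul_one, mul_zero, one_mul,
      zero_mul, add_zero, zero_add] at hu hv
    have ha : a = 0 := hnondeg a fun b => by
      have := hf (0, b, 0)
      simpa [doubleExtForm] using this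
    simp [hu, hv, ha, Prod.ext_iff]
end

section
/- Let 𝔤 = K × 𝔞 × K be the double extension of (𝔞, B) by the derivation D. Then for all c, a ∈ 𝔞 and every natural number n ≥ 1, the n-fold iterate of the adjoint map of (0,c,0) in 𝔤 satisfies (ad_𝔤 (0,c,0))^n (0,a,0) = (B (D c) ((ad c)^{n−1} a), (ad c)^n a, 0), where ad c denotes the adjoint map of c in 𝔞. -/
theorem double_extension_iterated_ad
    {K : Type*} [Field K] (hchar : (2 : K) ≠ 0)
    {L : Type*} [LieRing L] [LieAlgebra K L]
    (B : L →ₗ[K] L →ₗ[K] K)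
    (hsym : ∀ a b : L, B a b = B b a)
    (hinv : ∀ a b c : L, B ⁅a, b⁆ c = B a ⁅b, c⁆)
    (D : L →ₗ[K] L)
    (hder : ∀ a b : L, D ⁅a, b⁆ = ⁅D a, b⁆ + ⁅a, D b⁆)
    (hDinv : ∀ a b : L, B (D a) b + B a (D b) = 0) :
    ∀ (c a : L) (n : ℕ), 1 ≤ n →
      (fun g : K × L × K => doubleExtBracket B D ((0 : K), c, (0 : K)) g)^[n]
          ((0 : K), a, (0 : K)) =
        (B (D c) ((fun b : L => ⁅c, b⁆)^[n - 1] a), (fun b : L => ⁅c, b⁆)^[n] a, (0 : K)) := by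
  intro c a n hn
  induction n with
  | zero => omega
  | succ m ih =>
    rcases Nat.eq_zero_or_pos m with hm | hm
    · subst hm
      simp [doubleExtBracket]
    · rw [Function.iterate_succ_apply', ih hm]
      simp only [doubleExtBracket, Nat.add_sub_cancel]
      rw [Function.iterate_succ_apply']
      simp
end

section
/- Let K be a field of characteristic p, where p is an odd prime. Let 𝔞 be a Lie algebra over K, B a symmetric invariant K-bilinear form on 𝔞, and D : 𝔞 → 𝔞 a derivation such that B is D-invariant. Then for every a ∈ 𝔞, B (D a) ((ad a)^{p−2} (D a)) = 0. -/
theorem form_D_ad_pow_self_eq_zero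
    {K : Type*} [Field K] (p : ℕ) (hp : Nat.Prime p) (hodd : Odd p) [CharP K p]
    {L : Type*} [LieRing L] [LieAlgebra K L]
    (B : L →ₗ[K] L →ₗ[K] K)
    (hsym : ∀ a b : L, B a b = B b a)
    (hinv : ∀ a b c : L, B ⁅a, b⁆ c = B a ⁅b, c⁆)
    (D : L →ₗ[K] L)
    (hder : ∀ a b : L, D ⁅a, b⁆ = ⁅D a, b⁆ + ⁅a, D b⁆)
    (hDinv : ∀ a b : L, B (D a) b + B a (D b) = 0) :
    ∀ a : L, B (D a) ((fun b : L => ⁅a, b⁆)^[p - 2] (D a)) = 0 := by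
  intro a
  set f : L → L := fun b : L => ⁅a, b⁆ with hf
  -- ad a is skew-adjoint for B
  have hskew : ∀ b c : L, B (f b) c = - B b (f c) := by
    intro b c
    have : B ⁅a, b⁆ c = - B b ⁅a, c⁆ := by
      have h1 : (⁅a, b⁆ : L) = - ⁅b, a⁆ := by rw [lie_skew]
      rw [h1, map_neg, LinearMap.neg_apply, hinv]
    simpa [hf] using this
  have key : ∀ n : ℕ, ∀ b c : L, B (f^[n] b) c = (-1 : K)^n * B b (f^[n] c) := by
    intro n
    induction n with
    | zero => simp
    | succ n ih =>
      intro b c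
      rw [Function.iterate_succ_apply, ih, hskew, Function.iterate_succ_apply']
      ring
  set n := p - 2 with hn
  set x := D a with hx
  have h1 : B x (f^[n] x) = (-1 : K)^n * B x (f^[n] x) := by
    conv_lhs => rw [hsym, key n]
  have hnodd : Odd n := by
    obtain ⟨k, hk⟩ := hodd
    have hp2 : 2 ≤ p := hp.two_le
    refine ⟨k - 1, ?_⟩
    omega
  rw [hnodd.neg_one_pow] at h1
  have h2 : (2 : K) * B x (f^[n] x) = 0 := by linear_combination h1
  have h2ne : (2 : K) ≠ 0 := by
    intro h
    have hdvd : p ∣ 2 := (CharP.cast_eq_zero_iff K p 2).mp h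
    have := Nat.le_of_dvd (by norm_num) hdvd
    have h2le := hp.two_le
    interval_cases p
    · simp [Nat.odd_iff] at hodd
  have := mul_eq_zero.mp h2
  tauto
end

section
/- Let K be a field of characteristic p, p an odd prime, and let 𝔤 = K × 𝔞 × K be the double extension of (𝔞, B) by the derivation D. Suppose D has the p-property: there exist γ ∈ K and a₀ ∈ 𝔞 with D^p = γ • D + ad a₀ (equality of linear maps 𝔞 → 𝔞, where D^p is the p-fold composite of D) and D a₀ = 0. Then for every l ∈ K, the p-fold iterate of the adjoint of x* = (0,0,1) in 𝔤 equals the adjoint of (l, a₀, γ): (ad_𝔤 (0,0,1))^p f = ⁅(l, a₀, γ), f⁆_𝔤 for all f ∈ 𝔤. -/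
theorem iterated_ad_xstar_of_p_property
    {K : Type*} [Field K] (p : ℕ) (hp : Nat.Prime p) (hodd : Odd p) [CharP K p]
    {L : Type*} [LieRing L] [LieAlgebra K L]
    (B : L →ₗ[K] L →ₗ[K] K)
    (hsym : ∀ a b : L, B a b = B b a)
    (hinv : ∀ a b c : L, B ⁅a, b⁆ c = B a ⁅b, c⁆)
    (D : L →ₗ[K] L)
    (hder : ∀ a b : L, D ⁅a, b⁆ = ⁅D a, b⁆ + ⁅a, D b⁆)
    (hDinv : ∀ a b : L, B (D a) b + B a (D b) = 0)
    (γ : K) (a₀ : L)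
    (hpprop : ∀ b : L, (fun y : L => D y)^[p] b = γ • D b + ⁅a₀, b⁆)
    (ha₀ : D a₀ = 0) :
    ∀ (l : K) (f : K × L × K),
      (fun g : K × L × K => doubleExtBracket B D ((0 : K), (0 : L), (1 : K)) g)^[p] f =
        doubleExtBracket B D (l, a₀, γ) f := by
  intro l f
  obtain ⟨u, a, v⟩ := f
  have key : ∀ n : ℕ,
      (fun g : K × L × K => doubleExtBracket B D ((0 : K), (0 : L), (1 : K)) g)^[n+1] (u, a, v) =
        ((0 : K), (fun y : L => D y)^[n+1] a, (0 : K)) := by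
    intro n
    induction n with
    | zero => simp [doubleExtBracket]
    | succ n ih =>
      rw [Function.iterate_succ_apply', ih, Function.iterate_succ_apply']
      simp only [doubleExtBracket, map_zero, zero_lie, zero_smul, one_smul, smul_zero,
        zero_add, add_zero, sub_zero, LinearMap.map_zero, LinearMap.zero_apply]
      rw [Function.iterate_succ_apply', Function.iterate_succ_apply']
  obtain ⟨m, rfl⟩ : ∃ m, p = m + 1 := ⟨p - 1, (Nat.succ_pred_eq_of_pos hp.pos).symm⟩
  rw [key m, hpprop]
  simp [doubleExtBracket, ha₀, add_comm]
end

section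
/- Let K be a field of characteristic p, p an odd prime, and let 𝔤 = K × 𝔞 × K be the double extension of (𝔞, B) by the derivation D. Let a ∈ 𝔞 and suppose s ∈ 𝔞 satisfies ⁅s, b⁆ = (ad a)^p b for all b ∈ 𝔞 and D s = (ad a)^{p−1} (D a). Then for every c ∈ K, the p-fold iterate of the adjoint of (0,a,0) in 𝔤 equals the adjoint of (c, s, 0): (ad_𝔤 (0,a,0))^p f = ⁅(c, s, 0), f⁆_𝔤 for all f ∈ 𝔤. -/
theorem iterated_ad_of_p_power_element
    {K : Type*} [Field K] (p : ℕ) (hp : Nat.Prime p) (hodd : Odd p) [CharP K p]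
    {L : Type*} [LieRing L] [LieAlgebra K L]
    (B : L →ₗ[K] L →ₗ[K] K)
    (hsym : ∀ a b : L, B a b = B b a)
    (hinv : ∀ a b c : L, B ⁅a, b⁆ c = B a ⁅b, c⁆)
    (D : L →ₗ[K] L)
    (hder : ∀ a b : L, D ⁅a, b⁆ = ⁅D a, b⁆ + ⁅a, D b⁆)
    (hDinv : ∀ a b : L, B (D a) b + B a (D b) = 0)
    (a s : L)
    (hs : ∀ b : L, ⁅s, b⁆ = (fun y : L => ⁅a, y⁆)^[p] b)
    (hDs : D s = (fun y : L => ⁅a, y⁆)^[p - 1] (D a)) :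
    ∀ (c : K) (f : K × L × K),
      (fun g : K × L × K => doubleExtBracket B D ((0 : K), a, (0 : K)) g)^[p] f =
        doubleExtBracket B D (c, s, (0 : K)) f := by
  intro c f
  obtain ⟨u, b, v⟩ := f
  set A : L → L := fun y : L => ⁅a, y⁆ with hA
  set F : K × L × K → K × L × K :=
    fun g : K × L × K => doubleExtBracket B D ((0 : K), a, (0 : K)) g with hF
  obtain ⟨k, hk⟩ := hodd
  have hp2 : 2 ≤ p := hp.two_le
  obtain ⟨q, hq⟩ : ∃ q, p = q + 2 := ⟨p - 2, by omega⟩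
  have hqodd : Odd q := ⟨k - 1, by omega⟩
  have hq1even : Even (q + 1) := ⟨k, by omega⟩
  -- two is nonzero in K
  have h2 : (2 : K) ≠ 0 := by
    intro h
    have hd : (p : ℕ) ∣ 2 := (CharP.cast_eq_zero_iff K p 2).mp (by exact_mod_cast h)
    have := Nat.le_of_dvd (by norm_num) hd
    omega
  -- linearity of iterates of A
  have hiterlin : ∀ (n : ℕ) (x y : L) (t : K),
      A^[n] (x - t • y) = A^[n] x - t • A^[n] y := by
    intro n
    induction n with
    | zero => intro x y t; simp
    | succ n ih =>
      intro x y t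
      rw [Function.iterate_succ_apply, Function.iterate_succ_apply,
        Function.iterate_succ_apply]
      have hstep : A (x - t • y) = A x - t • A y := by
        simp [hA, lie_sub, lie_smul]
      rw [hstep, ih]
  -- skew-adjointness of A
  have hskew : ∀ x y : L, B x (A y) = - B (A x) y := by
    intro x y
    have h1 : B x (A y) = B (A y) x := hsym _ _
    have h2' : A y = -⁅y, a⁆ := by simp [hA]
    rw [h1, h2']
    have : B (-⁅y, a⁆) x = - B ⁅y, a⁆ x := by
      rw [map_neg]; simp
    rw [this, hinv y a x, hsym y ⁅a, x⁆]
  have hmove : ∀ (n : ℕ) (x y : L), B x (A^[n] y) = (-1 : K) ^ n * B (A^[n] x) y := by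
    intro n
    induction n with
    | zero => intro x y; simp
    | succ n ih =>
      intro x y
      rw [Function.iterate_succ_apply, ih, hskew]
      rw [Function.iterate_succ_apply' A n x]
      ring
  -- main iteration formula
  have hmain : ∀ (n : ℕ) (u' : K) (b' : L),
      F^[n + 1] (u', b', 0) = (B (D a) (A^[n] b'), A^[n + 1] b', (0 : K)) := by
    intro n
    induction n with
    | zero =>
      intro u' b'
      simp only [Function.iterate_one, hF, doubleExtBracket]
      simp [hA]
    | succ n ih =>
      intro u' b'
      rw [Function.iterate_succ_apply]
      have hFx : F (u', b', 0) = (B (D a) b', ⁅a, b'⁆, 0) := by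
        simp [hF, doubleExtBracket]
      rw [hFx, ih]
      show (B (D a) (A^[n] (A b')), A^[n + 1] (A b'), (0 : K)) = _
      rw [← Function.iterate_succ_apply A, ← Function.iterate_succ_apply A]
  -- rewrite hypotheses in terms of q
  have hs' : ∀ b' : L, ⁅s, b'⁆ = A^[q + 2] b' := by
    intro b'; rw [hs b', hq]
  have hDs' : D s = A^[q + 1] (D a) := by
    rw [hDs, hq]; norm_num
  -- the vanishing term
  have hvanish : B (D a) (A^[q] (D a)) = 0 := by
    have h1 : B (D a) (A^[q] (D a)) = (-1 : K) ^ q * B (A^[q] (D a)) (D a) :=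
      hmove q (D a) (D a)
    rw [hqodd.neg_one_pow, hsym (A^[q] (D a)) (D a)] at h1
    have : (2 : K) * B (D a) (A^[q] (D a)) = 0 := by linear_combination h1
    rcases mul_eq_zero.mp this with h | h
    · exact absurd h h2
    · exact h
  -- compute the left side
  have hstart : F (u, b, v) = (B (D a) b, A b - v • D a, 0) := by
    simp [hF, doubleExtBracket, hA]
  have hLHS : F^[p] (u, b, v) =
      (B (D a) (A^[q] (A b - v • D a)), A^[q + 1] (A b - v • D a), (0 : K)) := by
    have : p = (q + 1) + 1 := by omega
    rw [this, Function.iterate_succ_apply, hstart, hmain q]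
  rw [hLHS]
  -- compute the right side
  have hRHS : doubleExtBracket B D (c, s, (0 : K)) (u, b, v) =
      (B (D s) b, ⁅s, b⁆ - v • D s, (0 : K)) := by
    simp [doubleExtBracket]
  rw [hRHS]
  refine Prod.ext ?_ (Prod.ext ?_ rfl)
  · -- first coordinates
    show B (D a) (A^[q] (A b - v • D a)) = B (D s) b
    rw [hiterlin, map_sub, map_smul, hvanish, smul_zero, sub_zero,
      ← Function.iterate_succ_apply A q b, hmove (q + 1) (D a) b,
      hq1even.neg_one_pow, one_mul, hDs']
  · -- second coordinates
    show A^[q + 1] (A b - v • D a) = ⁅s, b⁆ - v • D s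
    rw [hiterlin, ← Function.iterate_succ_apply A (q + 1) b, hs' b, hDs']
end

section
/- Let K be a field of characteristic 3 and let 𝔤 = K × 𝔞 × K be the double extension of (𝔞, B) by the derivation D. Assume: (a) sq : 𝔞 → 𝔞 is a 3-structure on 𝔞, i.e. ⁅sq a, b⁆ = (ad a)³ b, sq (λ • a) = λ³ • sq a, and sq (a+b) = sq a + sq b + ⁅b,⁅b,a⁆⁆ + 2 • ⁅a,⁅b,a⁆⁆ for all a,b ∈ 𝔞, λ ∈ K; (b) D is restricted: D (sq a) = (ad a)² (D a) for all a; (c) D has the 3-property: D³ = γ • D + ad a₀ with D a₀ = 0, for some γ ∈ K and a₀ ∈ 𝔞; (d) b₀ ∈ 𝔞 satisfies ⁅b₀, a⁆ = 0 for all a ∈ 𝔞 and D b₀ = 0; (e) 𝒫 : 𝔞 → K satisfies 𝒫 (λ • a) = λ³ • 𝒫 a and 𝒫 (a+b) = 𝒫 a + 𝒫 b + B (D b) ⁅b,a⁆ + 2 • B (D a) ⁅b,a⁆ for all a,b ∈ 𝔞, λ ∈ K. Then for all m, l ∈ K there exists a map sq_𝔤 : 𝔤 → 𝔤 which is a 3-structure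 on 𝔤, i.e. ⁅sq_𝔤 f, g⁆_𝔤 = (ad_𝔤 f)³ g, sq_𝔤 (λ • f) = λ³ • sq_𝔤 f, and sq_𝔤 (f+g) = sq_𝔤 f + sq_𝔤 g + ⁅g,⁅g,f⁆_𝔤⁆_𝔤 + 2 • ⁅f,⁅g,f⁆_𝔤⁆_𝔤 for all f,g ∈ 𝔤, λ ∈ K, and which satisfies sq_𝔤 (0,a,0) = (𝒫 a, sq a, 0) for all a ∈ 𝔞, sq_𝔤 (0,0,1) = (l, a₀, γ), and sq_𝔤 (1,0,0) = (m, b₀, 0). -/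
theorem three_structure_on_double_extension
    {K : Type*} [Field K] [CharP K 3]
    {L : Type*} [LieRing L] [LieAlgebra K L]
    (B : L →ₗ[K] L →ₗ[K] K)
    (hsym : ∀ a b : L, B a b = B b a)
    (hinv : ∀ a b c : L, B ⁅a, b⁆ c = B a ⁅b, c⁆)
    (D : L →ₗ[K] L)
    (hder : ∀ a b : L, D ⁅a, b⁆ = ⁅D a, b⁆ + ⁅a, D b⁆)
    (hDinv : ∀ a b : L, B (D a) b + B a (D b) = 0)
    -- (a) a 3-structure on 𝔞
    (sq : L → L)
    (hsq_ad : ∀ a b : L, ⁅sq a, b⁆ = ⁅a, ⁅a, ⁅a, b⁆⁆⁆)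
    (hsq_smul : ∀ (l : K) (a : L), sq (l • a) = l ^ 3 • sq a)
    (hsq_add : ∀ a b : L, sq (a + b) = sq a + sq b + ⁅b, ⁅b, a⁆⁆ + (2 : K) • ⁅a, ⁅b, a⁆⁆)
    -- (b) D is restricted
    (hres : ∀ a : L, D (sq a) = ⁅a, ⁅a, D a⁆⁆)
    -- (c) the 3-property
    (γ : K) (a₀ : L)
    (hpprop : ∀ b : L, D (D (D b)) = γ • D b + ⁅a₀, b⁆)
    (ha₀ : D a₀ = 0)
    -- (d) a central element killed by D
    (b₀ : L) (hb₀c : ∀ a : L, ⁅b₀, a⁆ = 0) (hb₀ : D b₀ = 0)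
    -- (e) the map 𝒫
    (P : L → K)
    (hP_smul : ∀ (l : K) (a : L), P (l • a) = l ^ 3 * P a)
    (hP_add : ∀ a b : L,
      P (a + b) = P a + P b + B (D b) ⁅b, a⁆ + (2 : K) * B (D a) ⁅b, a⁆) :
    ∀ m l : K, ∃ sqg : K × L × K → K × L × K,
      (∀ f g : K × L × K,
        doubleExtBracket B D (sqg f) g =
          doubleExtBracket B D f (doubleExtBracket B D f (doubleExtBracket B D f g))) ∧
      (∀ (lam : K) (f : K × L × K), sqg (lam • f) = lam ^ 3 • sqg f) ∧
      (∀ f g : K × L × K,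
        sqg (f + g) = sqg f + sqg g + doubleExtBracket B D g (doubleExtBracket B D g f) +
          (2 : K) • doubleExtBracket B D f (doubleExtBracket B D g f)) ∧
      (∀ a : L, sqg ((0 : K), a, (0 : K)) = (P a, sq a, (0 : K))) ∧
      sqg ((0 : K), (0 : L), (1 : K)) = (l, a₀, γ) ∧
      sqg ((1 : K), (0 : L), (0 : K)) = (m, b₀, (0 : K)) := by
  have h3 : (3 : K) = 0 := by exact_mod_cast CharP.cast_eq_zero K 3
  have h2 : (2 : K) ≠ 0 := by
    intro h; apply (one_ne_zero (α := K)); linear_combination h3 - h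
  have hskew : ∀ x y : L, ⁅x, y⁆ = -⁅y, x⁆ := by
    intro x y; rw [← lie_skew y x, neg_neg]
  have hBD : ∀ x y : L, B (D x) y = - B x (D y) :=
    fun x y => eq_neg_of_add_eq_zero_left (hDinv x y)
  have halfz : ∀ x : K, x = -x → x = 0 := by
    intro x hx
    have : (2:K) * x = 0 := by linear_combination hx
    rcases mul_eq_zero.mp this with h | h
    · exact absurd h h2
    · exact h
  have E1 : ∀ a b : L, B (D a) ⁅a, ⁅a, b⁆⁆ = B ⁅a, ⁅a, D a⁆⁆ b := by
    intro a b
    rw [← hinv, ← hinv]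
    rw [show ⁅⁅D a, a⁆, a⁆ = ⁅a, ⁅a, D a⁆⁆ by
      rw [hskew (D a) a, neg_lie, hskew ⁅a, D a⁆ a, neg_neg]]
  have E2 : ∀ a b : L, B (D a) ⁅a, D b⁆ = B ⁅a, D (D a)⁆ b := by
    intro a b
    rw [← hinv, hsym, hBD, hder, map_add, lie_self, map_zero, add_zero,
      hskew (D (D a)) a, map_neg, neg_neg, hsym]
  have E3 : ∀ a : L, B (D a) ⁅a, D a⁆ = 0 := by
    intro a
    apply halfz
    conv_lhs => rw [← hinv, hskew (D a) a, map_neg, LinearMap.neg_apply, hsym]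
  have E4 : ∀ a b : L, B (D a) ⁅D a, b⁆ = 0 := by
    intro a b
    rw [← hinv, lie_self, map_zero, LinearMap.zero_apply]
  have E5 : ∀ a b : L, B (D a) (D (D b)) = γ * B (D a) b + B ⁅a₀, a⁆ b := by
    intro a b
    rw [hBD, hpprop, map_add, map_smul, smul_eq_mul, hBD a b,
      hsym a ⁅a₀, b⁆, hinv a₀ b a, hskew b a, map_neg, ← hinv a₀ a b]
    ring
  have E6 : ∀ a : L, B (D a) (D (D a)) = 0 := by
    intro a
    apply halfz
    conv_lhs => rw [hsym, hBD]
  have hsq0 : sq 0 = 0 := by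
    have := hsq_smul 0 0; simpa using this
  have hP0 : P 0 = 0 := by
    have := hP_smul 0 0; simpa using this
  intro m l
  refine ⟨fun p =>
    (P p.2.1 + m * p.1 ^ 3 + l * p.2.2 ^ 3 + 2 * p.2.2 * (B (D p.2.1) (D p.2.1)),
     sq p.2.1 - p.2.2 • ⁅p.2.1, D p.2.1⁆ + p.2.2 ^ 2 • D (D p.2.1) + p.2.2 ^ 3 • a₀
       + p.1 ^ 3 • b₀,
     γ * p.2.2 ^ 3), ?_, ?_, ?_, ?_, ?_, ?_⟩
  · -- bracket condition
    rintro ⟨u, a, v⟩ ⟨u', a', v'⟩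
    refine Prod.ext ?_ (Prod.ext ?_ ?_)
    · simp only [doubleExtBracket]
      simp only [map_add, map_sub, map_smul, map_zero, hder, hres, hpprop, ha₀, hb₀,
        lie_self, LinearMap.add_apply, LinearMap.sub_apply, LinearMap.smul_apply,
        LinearMap.zero_apply, smul_eq_mul, smul_add, smul_sub, add_zero, zero_smul,
        smul_zero, mul_zero, zero_mul, sub_zero, lie_add, add_lie, lie_sub, sub_lie,
        lie_smul, smul_lie]
      rw [E3, E6]
      rw [E4, E1, E2 a a', E5 a a']
      ring_nf
      linear_combination (norm := ring_nf) (-(v * (B ⁅a, D (D a)⁆) a')) * h3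
    · simp only [doubleExtBracket]
      simp only [map_add, map_sub, map_smul, map_zero, hder, hres, hsq_ad, hpprop, ha₀, hb₀,
        hb₀c, lie_add, add_lie, lie_sub, sub_lie, lie_smul, smul_lie, lie_zero, zero_lie,
        lie_self, smul_zero, zero_smul, smul_add, smul_sub, smul_neg, smul_smul]
      rw [leibniz_lie (D a) a a', hskew (D a) a]
      simp only [neg_lie, lie_neg, smul_neg, neg_neg]
      match_scalars <;>
        first
          | ring1
          | linear_combination (-v) * h3
          | linear_combination (-v ^ 2) * h3
          | linear_combination (-(v * v')) * h3
          | linear_combination v * h3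
          | linear_combination v ^ 2 * h3
          | linear_combination v' * h3
          | linear_combination (v * v') * h3
          | linear_combination (v ^ 2 * v') * h3
          | linear_combination (-(v ^ 2 * v')) * h3
    · simp [doubleExtBracket]
  · -- scaling
    rintro lam ⟨u, a, v⟩
    simp only [Prod.smul_mk, smul_eq_mul, Prod.mk.injEq, hsq_smul, hP_smul, map_smul,
      lie_smul, smul_lie, smul_smul, LinearMap.smul_apply]
    refine ⟨by ring, ?_, by ring⟩
    match_scalars <;> ring
  · -- additivity
    rintro ⟨u, a, v⟩ ⟨u', a', v'⟩
    refine Prod.ext ?_ (Prod.ext ?_ ?_)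
    · simp only [doubleExtBracket, Prod.mk_add_mk, Prod.smul_mk]
      simp only [map_add, map_sub, map_smul, map_zero, LinearMap.add_apply,
        LinearMap.sub_apply, LinearMap.smul_apply, LinearMap.zero_apply, smul_eq_mul,
        add_zero, zero_smul, smul_zero, mul_zero, zero_mul, sub_zero]
      linear_combination (norm := ring_nf) hP_add a a' + (2 * v + v') * hsym (D a') (D a) +
        (m * (u ^ 2 * u' + u * u' ^ 2) + l * (v ^ 2 * v' + v * v' ^ 2) +
          v * (B (D a')) (D a') + (2 * v + v') * (B (D a)) (D a')) * h3
    · simp only [doubleExtBracket, Prod.mk_add_mk, Prod.smul_mk]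
      simp only [map_add, map_sub, map_smul, map_zero, hder, hsq_add, hb₀c, hb₀,
        lie_add, add_lie, lie_sub, sub_lie, lie_smul, smul_lie, lie_zero, zero_lie,
        lie_self, smul_zero, zero_smul, smul_add, smul_sub, smul_neg, smul_smul]
      rw [hskew (D a') a]
      simp only [neg_lie, lie_neg, smul_neg, neg_neg]
      match_scalars <;>
        first
          | ring1
          | linear_combination (-v') * h3
          | linear_combination (-(v + v')) * h3
          | linear_combination v * h3
          | linear_combination (v * v' + v ^ 2) * h3
          | linear_combination (v * v' ^ 2 + v ^ 2 * v') * h3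
          | linear_combination (u * u' ^ 2 + u ^ 2 * u') * h3
    · simp only [doubleExtBracket, Prod.snd_add, Prod.fst_add, Prod.smul_mk, Prod.mk_add_mk,
        smul_eq_mul, Prod.snd]
      ring_nf
      linear_combination (γ * v * v' ^ 2 + γ * v ^ 2 * v') * h3
  · intro a
    simp [hsq0, hP0]
  · simp [hsq0, hP0, hres, hsq0, map_zero]
  · simp [hsq0, hP0]
end

section
/- Let K be a field of characteristic p, p a prime with p ≠ 2, and let 𝔤 = K × 𝔞 × K be the double extension of (𝔞, B) by the derivation D. Let a ∈ 𝔞, c ∈ K, s ∈ 𝔞, and suppose ⁅(c, s, 0), f⁆_𝔤 = (ad_𝔤 (0,a,0))^p f for all f ∈ 𝔤. Then ⁅s, b⁆ = (ad a)^p b for all b ∈ 𝔞 and D s = (ad a)^{p−1} (D a). -/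
theorem p_power_element_of_iterated_ad
    {K : Type*} [Field K] (p : ℕ) (hp : Nat.Prime p) (hp2 : p ≠ 2) [CharP K p]
    {L : Type*} [LieRing L] [LieAlgebra K L]
    (B : L →ₗ[K] L →ₗ[K] K)
    (hsym : ∀ a b : L, B a b = B b a)
    (hinv : ∀ a b c : L, B ⁅a, b⁆ c = B a ⁅b, c⁆)
    (D : L →ₗ[K] L)
    (hder : ∀ a b : L, D ⁅a, b⁆ = ⁅D a, b⁆ + ⁅a, D b⁆)
    (hDinv : ∀ a b : L, B (D a) b + B a (D b) = 0)
    (a : L) (c : K) (s : L)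
    (h : ∀ f : K × L × K,
      doubleExtBracket B D (c, s, (0 : K)) f =
        (fun g : K × L × K => doubleExtBracket B D ((0 : K), a, (0 : K)) g)^[p] f) :
    (∀ b : L, ⁅s, b⁆ = (fun y : L => ⁅a, y⁆)^[p] b) ∧
      D s = (fun y : L => ⁅a, y⁆)^[p - 1] (D a) := by
  set F : K × L × K → K × L × K := fun g => doubleExtBracket B D ((0 : K), a, (0 : K)) g
    with hF
  set A : L → L := fun y : L => ⁅a, y⁆ with hA
  -- iterate of F on elements with third coordinate 0
  have key : ∀ (n : ℕ) (u : K) (b : L), ∃ w : K, F^[n] (u, b, 0) = (w, A^[n] b, 0) := by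
    intro n
    induction n with
    | zero => intro u b; exact ⟨u, rfl⟩
    | succ n ih =>
      intro u b
      rw [Function.iterate_succ_apply]
      have hFb : F (u, b, 0) = (B (D a) b, ⁅a, b⁆, 0) := by
        simp [hF, doubleExtBracket]
      rw [hFb]
      obtain ⟨w, hw⟩ := ih (B (D a) b) ⁅a, b⁆
      refine ⟨w, ?_⟩
      rw [hw, ← Function.iterate_succ_apply]
  have Aneg : ∀ (n : ℕ) (y : L), A^[n] (-y) = -A^[n] y := by
    intro n
    induction n with
    | zero => intro y; rfl
    | succ n ih =>
      intro y
      rw [Function.iterate_succ_apply, Function.iterate_succ_apply]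
      have : A (-y) = -A y := by simp [hA]
      rw [this, ih]
  have hp1 : p - 1 + 1 = p := Nat.succ_pred_eq_of_pos hp.pos
  constructor
  · intro b
    have hb := h (0, b, 0)
    have lhs : doubleExtBracket B D (c, s, (0 : K)) (0, b, 0)
        = (B (D s) b, ⁅s, b⁆, 0) := by
      simp [doubleExtBracket]
    obtain ⟨w, hw⟩ := key p 0 b
    rw [lhs] at hb
    have := congrArg (fun t : K × L × K => t.2.1) hb
    simpa [hw] using this
  · have hb := h (0, 0, 1)
    have lhs : doubleExtBracket B D (c, s, (0 : K)) ((0 : K), (0 : L), (1 : K))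
        = (0, -D s, 0) := by
      simp [doubleExtBracket]
    have hF1 : F ((0 : K), (0 : L), (1 : K)) = (0, -(D a), 0) := by
      simp [hF, doubleExtBracket]
    have step : F^[p] ((0 : K), (0 : L), (1 : K)) = F^[p-1] (0, -(D a), 0) := by
      conv_lhs => rw [← hp1]
      rw [Function.iterate_succ_apply, hF1]
    obtain ⟨w, hw⟩ := key (p - 1) 0 (-(D a))
    rw [lhs] at hb
    have := congrArg (fun t : K × L × K => t.2.1) hb
    simp only [step, hw, Aneg] at this
    simpa using neg_injective this
end

section
/- Let (𝔤, B) be a finite-dimensional NIS-algebra over a field K with char K ≠ 2, with dim 𝔤 > 1, which is irreducible: every Lie ideal I of 𝔤 such that 𝔤 is the internal direct sum of I and its B-orthogonal complement I^⊥ := {g ∈ 𝔤 : B g i = 0 for all i ∈ I} satisfies I = 0 or I = 𝔤. Let x ∈ 𝔤 be nonzero with ⁅x, g⁆ = 0 for all g ∈ 𝔤. Then: (1) B x x = 0; (2) there exists x* ∈ 𝔤 with B x x* = 1 and B x* x* = 0; and, setting 𝔞 := {a ∈ 𝔤 : B x a = 0 and B x* a = 0}, (3) 𝔤 is the internal direct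 sum of the subspaces K • x, 𝔞 and K • x*; (4) ⁅x*, a⁆ ∈ 𝔞 for all a ∈ 𝔞; (5) for all a, b ∈ 𝔞 the element [a,b]₀ := ⁅a,b⁆ − (B ⁅x*,a⁆ b) • x lies in 𝔞, and the bracket [·,·]₀ on 𝔞 is alternating and satisfies the Jacobi identity, so (𝔞, [·,·]₀) is a Lie algebra; (6) the map D : 𝔞 → 𝔞, D a := ⁅x*, a⁆, is a derivation of (𝔞, [·,·]₀); (7) the restriction B_𝔞 of B to 𝔞 is symmetric, nondegenerate, invariant for [·,·]₀, and D-invariant: B (D a) b + B a (D b) = 0 for all a, b ∈ 𝔞. -/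
theorem restricted_NIS_algebra_is_double_extension_data
    {K : Type*} [Field K] (hchar : (2 : K) ≠ 0)
    {G : Type*} [LieRing G] [LieAlgebra K G] [FiniteDimensional K G]
    (hdim : 1 < Module.finrank K G)
    (B : G →ₗ[K] G →ₗ[K] K)
    (hsym : ∀ a b : G, B a b = B b a)
    (hinv : ∀ a b c : G, B ⁅a, b⁆ c = B a ⁅b, c⁆)
    (hnd : ∀ a : G, (∀ b : G, B a b = 0) → a = 0)
    -- irreducibility: any Lie ideal `I` such that `G` is the internal direct sum of
    -- `I` and its `B`-orthogonal complement is trivial.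
    (hirr : ∀ I : LieIdeal K G,
      (∀ g : G, ∃ i ∈ I, ∃ j : G, (∀ i' ∈ I, B j i' = 0) ∧ g = i + j) →
      (∀ i ∈ I, (∀ i' ∈ I, B i i' = 0) → i = 0) →
      I = ⊥ ∨ I = ⊤)
    (x : G) (hx0 : x ≠ 0) (hxc : ∀ g : G, ⁅x, g⁆ = 0) :
    -- (1)
    B x x = 0 ∧
    -- (2)
    ∃ xs : G, B x xs = 1 ∧ B xs xs = 0 ∧
    ∃ br0 : G → G → G,
      (∀ a b : G, br0 a b = ⁅a, b⁆ - (B ⁅xs, a⁆ b) • x) ∧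
      -- (3) G is the internal direct sum of K•x, 𝔞 := {a | B x a = 0 ∧ B xs a = 0} and K•xs
      (∀ g : G, ∃ (u v : K) (a : G), (B x a = 0 ∧ B xs a = 0) ∧ g = u • x + a + v • xs) ∧
      (∀ (u v : K) (a : G), (B x a = 0 ∧ B xs a = 0) → u • x + a + v • xs = 0 →
        u = 0 ∧ a = 0 ∧ v = 0) ∧
      -- (4) 𝔞 is stable under D := ⁅xs, ·⁆
      (∀ a : G, (B x a = 0 ∧ B xs a = 0) → B x ⁅xs, a⁆ = 0 ∧ B xs ⁅xs, a⁆ = 0) ∧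
      -- (5) [·,·]₀ maps 𝔞 × 𝔞 to 𝔞, is alternating and satisfies the Jacobi identity
      (∀ a b : G, (B x a = 0 ∧ B xs a = 0) → (B x b = 0 ∧ B xs b = 0) →
        B x (br0 a b) = 0 ∧ B xs (br0 a b) = 0) ∧
      (∀ a : G, (B x a = 0 ∧ B xs a = 0) → br0 a a = 0) ∧
      (∀ a b c : G, (B x a = 0 ∧ B xs a = 0) → (B x b = 0 ∧ B xs b = 0) →
        (B x c = 0 ∧ B xs c = 0) →
        br0 a (br0 b c) = br0 (br0 a b) c + br0 b (br0 a c)) ∧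
      -- (6) D = ⁅xs, ·⁆ is a derivation of (𝔞, [·,·]₀)
      (∀ a b : G, (B x a = 0 ∧ B xs a = 0) → (B x b = 0 ∧ B xs b = 0) →
        ⁅xs, br0 a b⁆ = br0 ⁅xs, a⁆ b + br0 a ⁅xs, b⁆) ∧
      -- (7) properties of the restriction of B to 𝔞
      (∀ a b : G, (B x a = 0 ∧ B xs a = 0) → (B x b = 0 ∧ B xs b = 0) → B a b = B b a) ∧
      (∀ a : G, (B x a = 0 ∧ B xs a = 0) →
        (∀ b : G, (B x b = 0 ∧ B xs b = 0) → B a b = 0) → a = 0) ∧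
      (∀ a b c : G, (B x a = 0 ∧ B xs a = 0) → (B x b = 0 ∧ B xs b = 0) →
        (B x c = 0 ∧ B xs c = 0) → B (br0 a b) c = B a (br0 b c)) ∧
      (∀ a b : G, (B x a = 0 ∧ B xs a = 0) → (B x b = 0 ∧ B xs b = 0) →
        B ⁅xs, a⁆ b + B a ⁅xs, b⁆ = 0) := by

  have hxg : ∀ g : G, ⁅g, x⁆ = 0 := fun g => by rw [← lie_skew, hxc g, neg_zero]
  -- (1)
  have h1 : B x x = 0 := by
    by_contra hBxx
    let I : LieIdeal K G :=
      { toSubmodule := Submodule.span K {x}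
        lie_mem := fun {g m} hm => by
          rcases Submodule.mem_span_singleton.mp hm with ⟨c, rfl⟩
          show ⁅g, c • x⁆ ∈ Submodule.span K {x}
          rw [lie_smul, hxg, smul_zero]
          exact Submodule.zero_mem _ }
    have hmem : ∀ m : G, m ∈ I ↔ ∃ c : K, c • x = m := fun m =>
      Submodule.mem_span_singleton
    have hxI : x ∈ I := (hmem x).mpr ⟨1, one_smul K x⟩
    have hdec : ∀ g : G, ∃ i ∈ I, ∃ j : G, (∀ i' ∈ I, B j i' = 0) ∧ g = i + j := by
      intro g
      refine ⟨(B x g / B x x) • x, Submodule.smul_mem _ _ hxI,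
        g - (B x g / B x x) • x, ?_, by module⟩
      intro i' hi'
      rcases (hmem i').mp hi' with ⟨c, rfl⟩
      have hkey : B (g - (B x g / B x x) • x) x = 0 := by
        simp only [map_sub, map_smul, LinearMap.sub_apply, LinearMap.smul_apply,
          smul_eq_mul]
        field_simp
        rw [hsym g x]
        ring
      simp only [map_sub, map_smul, LinearMap.sub_apply, LinearMap.smul_apply,
        smul_eq_mul] at hkey
      simp [map_smul, smul_eq_mul, hkey]
    have hnondeg : ∀ i ∈ I, (∀ i' ∈ I, B i i' = 0) → i = 0 := by
      intro i hi hiorth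
      rcases (hmem i).mp hi with ⟨c, rfl⟩
      have h := hiorth (c • x) ((hmem _).mpr ⟨c, rfl⟩)
      simp only [map_smul, LinearMap.smul_apply, smul_eq_mul] at h
      rcases mul_eq_zero.mp h with h | h
      · simp [h]
      · rcases mul_eq_zero.mp h with h | h
        · simp [h]
        · exact absurd h hBxx
    rcases hirr I hdec hnondeg with hbot | htop
    · rw [hbot] at hxI
      exact hx0 (by simpa using hxI)
    · have hspan : Submodule.span K {x} = (⊤ : Submodule K G) := by
        have h := congrArg (fun J : LieIdeal K G => (J : Submodule K G)) htop
        simpa [I] using h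
      have h2 := finrank_span_singleton (K := K) hx0
      rw [hspan] at h2
      rw [finrank_top] at h2
      omega
  obtain ⟨y, hy⟩ : ∃ y, B x y ≠ 0 := by
    by_contra h
    push_neg at h
    exact hx0 (hnd x h)
  set y' : G := (B x y)⁻¹ • y with hy'
  have hxy' : B x y' = 1 := by
    simp [hy', map_smul, smul_eq_mul]
    field_simp
  set c : K := B y' y' with hc
  set xs : G := y' - (c / 2) • x with hxs
  have hBxxs : B x xs = 1 := by
    simp [hxs, map_sub, map_smul, smul_eq_mul, hxy', h1]
  have hBxsx : B xs x = 1 := by rw [hsym]; exact hBxxs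
  have hBy'x : B y' x = 1 := by rw [hsym]; exact hxy'
  have hBxsxs : B xs xs = 0 := by
    simp only [hxs, map_sub, map_smul, LinearMap.sub_apply, LinearMap.smul_apply,
      smul_eq_mul, hxy', hBy'x, h1, ← hc]
    field_simp
    ring
  have hxsX : ∀ g : G, B ⁅xs, g⁆ x = 0 := fun g => by
    rw [hinv, hxg, map_zero]
  have hBxlie : ∀ a b : G, B x ⁅a, b⁆ = B ⁅x, a⁆ b := fun a b => (hinv x a b).symm
  have hBxslie : ∀ a b : G, B xs ⁅a, b⁆ = B ⁅xs, a⁆ b := fun a b => (hinv xs a b).symm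
  refine ⟨h1, xs, hBxxs, hBxsxs, fun a b => ⁅a, b⁆ - (B ⁅xs, a⁆ b) • x,
    fun a b => rfl, ?_, ?_, ?_, ?_, ?_, ?_, ?_, ?_, ?_, ?_, ?_⟩
  · -- decomposition existence
    intro g
    refine ⟨B xs g, B x g, g - (B xs g) • x - (B x g) • xs, ⟨?_, ?_⟩, by abel⟩
    · simp [map_sub, map_smul, smul_eq_mul, h1, hBxxs]
    · simp [map_sub, map_smul, smul_eq_mul, hBxsx, hBxsxs]
  · -- decomposition uniqueness
    intro u v a ⟨ha1, ha2⟩ heq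
    have h1' : B xs (u • x + a + v • xs) = 0 := by rw [heq]; simp
    have h2' : B x (u • x + a + v • xs) = 0 := by rw [heq]; simp
    simp only [map_add, map_smul, smul_eq_mul, hBxsx, hBxsxs, h1, hBxxs,
      ha1, ha2, mul_one, mul_zero, add_zero, zero_add] at h1' h2'
    refine ⟨h1', ?_, h2'⟩
    rw [h1', h2'] at heq
    simpa using heq
  · -- (4)
    intro a _
    constructor
    · rw [hBxlie, hxc, map_zero]; rfl
    · rw [hBxslie, lie_self, map_zero]; rfl
  · -- (5) membership
    intro a b _ _
    constructor
    · simp [map_sub, map_smul, smul_eq_mul, h1, hBxlie, hxc]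
    · simp [map_sub, map_smul, smul_eq_mul, hBxsx, hBxslie]
  · -- (5) alternating
    intro a _
    have : B ⁅xs, a⁆ a = 0 := by rw [hinv, lie_self, map_zero]
    simp [this]
  · -- (5) Jacobi
    intro a b c' _ _ _
    have key : B ⁅xs, a⁆ ⁅b, c'⁆ = B ⁅xs, ⁅a, b⁆⁆ c' + B ⁅xs, b⁆ ⁅a, c'⁆ := by
      rw [hinv, hinv, hinv]
      rw [show ⁅a, ⁅b, c'⁆⁆ = ⁅⁅a, b⁆, c'⁆ + ⁅b, ⁅a, c'⁆⁆ from leibniz_lie a b c']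
      rw [map_add]
    simp only [lie_sub, lie_smul, sub_lie, smul_lie, hxg, hxc, smul_zero, zero_smul,
      sub_zero, map_sub, map_smul, LinearMap.sub_apply, LinearMap.smul_apply,
      smul_eq_mul, hxsX, mul_zero]
    rw [show ⁅a, ⁅b, c'⁆⁆ = ⁅⁅a, b⁆, c'⁆ + ⁅b, ⁅a, c'⁆⁆ from leibniz_lie a b c', key,
      add_smul]
    abel
  · -- (6) derivation
    intro a b _ _
    have key : B ⁅xs, ⁅xs, a⁆⁆ b + B ⁅xs, a⁆ ⁅xs, b⁆ = 0 := by
      rw [hinv, hinv, ← map_add]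
      rw [show ⁅⁅xs, a⁆, b⁆ + ⁅a, ⁅xs, b⁆⁆ = ⁅xs, ⁅a, b⁆⁆ by
        rw [leibniz_lie xs a b]]
      rw [← hinv, lie_self, map_zero]
      exact LinearMap.zero_apply _
    simp only [lie_sub, lie_smul, hxg, hxc, smul_zero, sub_zero]
    rw [leibniz_lie xs a b]
    have : B ⁅xs, ⁅xs, a⁆⁆ b = -B ⁅xs, a⁆ ⁅xs, b⁆ :=
      eq_neg_of_add_eq_zero_left key
    rw [this, neg_smul]
    abel
  · -- (7) symmetry
    intro a b _ _
    exact hsym a b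
  · -- (7) nondegeneracy
    intro a ⟨ha1, ha2⟩ horth
    apply hnd
    intro g
    have hg : g = (B xs g) • x + (g - (B xs g) • x - (B x g) • xs) + (B x g) • xs := by
      abel
    rw [hg]
    have hb1 : B x (g - (B xs g) • x - (B x g) • xs) = 0 := by
      simp [map_sub, map_smul, smul_eq_mul, h1, hBxxs]
    have hb2 : B xs (g - (B xs g) • x - (B x g) • xs) = 0 := by
      simp [map_sub, map_smul, smul_eq_mul, hBxsx, hBxsxs]
    have hax : B a x = 0 := by rw [hsym]; exact ha1
    have haxs : B a xs = 0 := by rw [hsym]; exact ha2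
    rw [map_add, map_add, map_smul, map_smul, hax, haxs,
      horth _ ⟨hb1, hb2⟩]
    simp
  · -- (7) invariance
    intro a b c' ⟨ha1, _⟩ ⟨_, _⟩ ⟨hc1, _⟩
    have h1' : B x c' = 0 := hc1
    have h2' : B a x = 0 := by rw [hsym]; exact ha1
    simp only [map_sub, map_smul, LinearMap.sub_apply, LinearMap.smul_apply,
      smul_eq_mul]
    rw [h1', hinv, h2']
    ring
  · -- (7) D-invariance
    intro a b _ _
    have h2 : B a ⁅xs, b⁆ = - B ⁅xs, a⁆ b := by
      rw [← hinv a xs b, ← lie_skew a xs, map_neg, LinearMap.neg_apply]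
    rw [h2]; ring
end

section
/- Let K be a field of characteristic 2, 𝔥 a Lie algebra over K, and sq_𝔥 : 𝔥 → 𝔥 a 2-structure on 𝔥: ⁅sq_𝔥 h, h'⁆ = ⁅h,⁅h,h'⁆⁆, sq_𝔥 (λ • h) = λ² • sq_𝔥 h, and sq_𝔥 (h + h') = sq_𝔥 h + sq_𝔥 h' + ⁅h,h'⁆ for all h, h' ∈ 𝔥 and λ ∈ K. On 𝔥 × 𝔥* with the bracket ⁅(h,π),(h',π')⁆ := (⁅h,h'⁆, π ∘ ad h' + π' ∘ ad h), define Q (h,π) := (sq_𝔥 h, π ∘ ad h). Then Q is a 2-structure on 𝔥 × 𝔥*: ⁅Q f, g⁆ = ⁅f,⁅f,g⁆⁆, Q (λ • f) = λ² • Q f, and Q (f + g) = Q f + Q g + ⁅f,g⁆ for all f, g ∈ 𝔥 × 𝔥* and λ ∈ K. -/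
/-- The bracket on the Manin triple `𝔥 ⊕ 𝔥*` (with `𝔥*` abelian), in characteristic 2. -/
def maninBracket {K : Type*} [Field K] {H : Type*} [LieRing H] [LieAlgebra K H]
    (f g : H × (H →ₗ[K] K)) : H × (H →ₗ[K] K) :=
  (⁅f.1, g.1⁆, f.2 ∘ₗ (LieAlgebra.ad K H g.1) + g.2 ∘ₗ (LieAlgebra.ad K H f.1))

/-- The induced squaring on the Manin triple `𝔥 ⊕ 𝔥*`. -/
def maninSq {K : Type*} [Field K] {H : Type*} [LieRing H] [LieAlgebra K H]
    (sqH : H → H) (f : H × (H →ₗ[K] K)) : H × (H →ₗ[K] K) :=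
  (sqH f.1, f.2 ∘ₗ (LieAlgebra.ad K H f.1))

theorem manin_triple_two_structure
    {K : Type*} [Field K] [CharP K 2]
    {H : Type*} [LieRing H] [LieAlgebra K H]
    (sqH : H → H)
    (hsq_ad : ∀ h h' : H, ⁅sqH h, h'⁆ = ⁅h, ⁅h, h'⁆⁆)
    (hsq_smul : ∀ (l : K) (h : H), sqH (l • h) = l ^ 2 • sqH h)
    (hsq_add : ∀ h h' : H, sqH (h + h') = sqH h + sqH h' + ⁅h, h'⁆) :
    (∀ f g : H × (H →ₗ[K] K),
      maninBracket (maninSq sqH f) g = maninBracket f (maninBracket f g)) ∧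
    (∀ (l : K) (f : H × (H →ₗ[K] K)), maninSq sqH (l • f) = l ^ 2 • maninSq sqH f) ∧
    (∀ f g : H × (H →ₗ[K] K),
      maninSq sqH (f + g) = maninSq sqH f + maninSq sqH g + maninBracket f g) := by
  refine ⟨?_, ?_, ?_⟩
  · intro f g
    refine Prod.ext (hsq_ad f.1 g.1) ?_
    ext y
    simp only [maninBracket, maninSq, LinearMap.add_apply, LinearMap.comp_apply,
      LieAlgebra.ad_apply, hsq_ad, lie_lie, map_sub]
    rw [CharTwo.sub_eq_add]
    ring_nf
    simp [CharTwo.two_eq_zero]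
  · intro l f
    refine Prod.ext (hsq_smul l f.1) ?_
    ext y
    simp only [maninSq, Prod.smul_fst, Prod.smul_snd, LinearMap.comp_apply,
      LieAlgebra.ad_apply, LinearMap.smul_apply, smul_lie, map_smul, smul_smul, sq]
  · intro f g
    refine Prod.ext (hsq_add f.1 g.1) ?_
    ext y
    simp only [maninSq, maninBracket, Prod.fst_add, Prod.snd_add, LinearMap.add_apply,
      LinearMap.comp_apply, LieAlgebra.ad_apply, lie_add, add_lie, map_add]
    ring
end
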